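/- The Lagrangian angle of the Schoen–Wolfson cone parametrization Φ_{p,q} equals e^{i(p-q)θ}: explicitly, dz₁∧dz₂ evaluated on (∂_r Φ_{p,q}, (1/r) ∂_θ Φ_{p,q}) equals e^{i(p-q)θ} times |∂_r Φ_{p,q}|² for all r > 0 and θ. -/

import Mathlib

/-- The Schoen–Wolfson cone parametrization `Φ_{p,q}` in polar coordinates. -/
noncomputable def SWPhi (p q : ℕ) (r θ : ℝ) : ℂ × ℂ :=
  ( ((r ^ Real.sqrt ((p : ℝ) * q) / Real.sqrt ((p : ℝ) + q) * Real.sqrt q : ℝ) : ℂ) *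
      Complex.exp (Complex.I * p * θ),
    ((r ^ Real.sqrt ((p : ℝ) * q) / Real.sqrt ((p : ℝ) + q) * Real.sqrt p : ℝ) : ℂ) *
      Complex.I * Complex.exp (-(Complex.I * q * θ)) )

/-- The real (Euclidean) inner product on `ℂ² ≅ ℝ⁴`. -/
noncomputable def rinner (u v : ℂ × ℂ) : ℝ :=
  (u.1 * (starRingEnd ℂ) v.1).re + (u.2 * (starRingEnd ℂ) v.2).re

/-- The holomorphic area form `dz₁ ∧ dz₂` evaluated on tangent vectors `u, v ∈ ℂ²`. -/
noncomputable def dzWedge (u v : ℂ × ℂ) : ℂ := u.1 * v.2 - u.2 * v.1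

/-- The Lagrangian angle of `Φ_{p,q}`:
`dz₁∧dz₂(∂_r Φ, (1/r)∂_θ Φ) = e^{i(p-q)θ} |∂_r Φ|²` for all `r > 0` and `θ`. -/
theorem swcone_lagrangian_angle (p q : ℕ) (hp : 0 < p) (hq : 0 < q) (r θ : ℝ) (hr : 0 < r) :
    dzWedge (deriv (fun s => SWPhi p q s θ) r) (r⁻¹ • deriv (fun t => SWPhi p q r t) θ) =
      Complex.exp (Complex.I * ((p : ℂ) - q) * θ) *
        (rinner (deriv (fun s => SWPhi p q s θ) r) (deriv (fun s => SWPhi p q s θ) r) : ℝ) := by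
  set K : ℝ := Real.sqrt ((p : ℝ) * q) with hK
  set B : ℝ := Real.sqrt ((p : ℝ) + q) with hB
  have hrad : HasDerivAt (fun s : ℝ => s ^ K / B) (K * r ^ (K - 1) / B) r :=
    (Real.hasDerivAt_rpow_const (Or.inl hr.ne')).div_const B
  have h1r : HasDerivAt (fun s : ℝ => SWPhi p q s θ)
      ( ((K * r ^ (K - 1) / B * Real.sqrt q : ℝ) : ℂ) * Complex.exp (Complex.I * p * θ),
        ((K * r ^ (K - 1) / B * Real.sqrt p : ℝ) : ℂ) * Complex.I *
          Complex.exp (-(Complex.I * q * θ)) ) r := by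
    refine HasDerivAt.prodMk ?_ ?_
    · exact ((hrad.mul_const (Real.sqrt q)).ofReal_comp).mul_const _
    · exact (((hrad.mul_const (Real.sqrt p)).ofReal_comp).mul_const Complex.I).mul_const _
  have hlin : ∀ c : ℂ, HasDerivAt (fun t : ℝ => c * (t : ℂ)) c θ := fun c => by
    simpa using ((hasDerivAt_id θ).ofReal_comp).const_mul c
  have h1θ : HasDerivAt (fun t : ℝ => SWPhi p q r t)
      ( ((r ^ K / B * Real.sqrt q : ℝ) : ℂ) * (Complex.exp (Complex.I * p * θ) *
          (Complex.I * p)),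
        ((r ^ K / B * Real.sqrt p : ℝ) : ℂ) * Complex.I *
          (Complex.exp (-(Complex.I * q * θ)) * (-(Complex.I * q))) ) θ := by
    refine HasDerivAt.prodMk ?_ ?_
    · have : HasDerivAt (fun t : ℝ => Complex.exp (Complex.I * p * t))
          (Complex.exp (Complex.I * p * θ) * (Complex.I * p)) θ := by
        simpa [mul_assoc] using (hlin (Complex.I * p)).cexp
      exact this.const_mul _
    · have : HasDerivAt (fun t : ℝ => Complex.exp (-(Complex.I * q * t)))
          (Complex.exp (-(Complex.I * q * θ)) * (-(Complex.I * q))) θ := by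
        simpa [mul_assoc] using ((hlin (Complex.I * q)).neg).cexp
      exact this.const_mul _
  rw [h1r.deriv, h1θ.deriv]
  have hBpos : (0 : ℝ) < B := Real.sqrt_pos.2 (by positivity)
  have hB2 : B ^ 2 = (p : ℝ) + q := Real.sq_sqrt (by positivity)
  have hK2 : K ^ 2 = (p : ℝ) * q := Real.sq_sqrt (by positivity)
  have hpq : Real.sqrt p * Real.sqrt q = K := (Real.sqrt_mul (by positivity) _).symm
  have hq2 : Real.sqrt q ^ 2 = (q : ℝ) := Real.sq_sqrt (by positivity)
  have hp2 : Real.sqrt p ^ 2 = (p : ℝ) := Real.sq_sqrt (by positivity)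
  have hE : Complex.exp (Complex.I * p * θ) * Complex.exp (-(Complex.I * q * θ)) =
      Complex.exp (Complex.I * ((p : ℂ) - q) * θ) := by
    rw [← Complex.exp_add]; ring_nf
  have hconj1 : (starRingEnd ℂ) (Complex.exp (Complex.I * p * θ)) =
      Complex.exp (-(Complex.I * p * θ)) := by
    rw [← Complex.exp_conj]; simp
  have hconj2 : (starRingEnd ℂ) (Complex.exp (-(Complex.I * q * θ))) =
      Complex.exp (Complex.I * q * θ) := by
    rw [← Complex.exp_conj]; simp
  simp only [dzWedge, rinner, Prod.smul_fst, Prod.smul_snd, smul_eq_mul, map_mul,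
    hconj1, hconj2, Complex.conj_I, Complex.conj_ofReal]
  have e1 : Complex.exp (Complex.I * p * θ) * Complex.exp (-(Complex.I * p * θ)) = 1 := by
    rw [← Complex.exp_add]; ring_nf; exact Complex.exp_zero
  have e2 : Complex.exp (-(Complex.I * q * θ)) * Complex.exp (Complex.I * q * θ) = 1 := by
    rw [← Complex.exp_add]; ring_nf; exact Complex.exp_zero
  rw [← hE]
  have hrK : r ^ K = r ^ (K - 1) * r := by
    rw [← Real.rpow_add_one hr.ne' (K - 1), sub_add_cancel]
  have hre1 : (((K * r ^ (K - 1) / B * Real.sqrt q : ℝ) : ℂ) * Complex.exp (Complex.I * p * θ) *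
      (((K * r ^ (K - 1) / B * Real.sqrt q : ℝ) : ℂ) * Complex.exp (-(Complex.I * p * θ)))).re
      = (K * r ^ (K - 1) / B * Real.sqrt q) ^ 2 := by
    rw [show (((K * r ^ (K - 1) / B * Real.sqrt q : ℝ) : ℂ) * Complex.exp (Complex.I * p * θ) *
      (((K * r ^ (K - 1) / B * Real.sqrt q : ℝ) : ℂ) * Complex.exp (-(Complex.I * p * θ))))
      = (((K * r ^ (K - 1) / B * Real.sqrt q : ℝ) : ℂ) ^ 2) *
        (Complex.exp (Complex.I * p * θ) * Complex.exp (-(Complex.I * p * θ))) from by ring,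
      e1, mul_one, ← Complex.ofReal_pow, Complex.ofReal_re]
  have hre2 : (((K * r ^ (K - 1) / B * Real.sqrt p : ℝ) : ℂ) * Complex.I *
        Complex.exp (-(Complex.I * q * θ)) *
      (((K * r ^ (K - 1) / B * Real.sqrt p : ℝ) : ℂ) * -Complex.I *
        Complex.exp (Complex.I * q * θ))).re
      = (K * r ^ (K - 1) / B * Real.sqrt p) ^ 2 := by
    rw [show (((K * r ^ (K - 1) / B * Real.sqrt p : ℝ) : ℂ) * Complex.I *
        Complex.exp (-(Complex.I * q * θ)) *
      (((K * r ^ (K - 1) / B * Real.sqrt p : ℝ) : ℂ) * -Complex.I *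
        Complex.exp (Complex.I * q * θ)))
      = (((K * r ^ (K - 1) / B * Real.sqrt p : ℝ) : ℂ) ^ 2) * (-(Complex.I * Complex.I)) *
        (Complex.exp (-(Complex.I * q * θ)) * Complex.exp (Complex.I * q * θ)) from by ring,
      e2, Complex.I_mul_I, mul_one, neg_neg, mul_one, ← Complex.ofReal_pow, Complex.ofReal_re]
  rw [hre1, hre2]
  have hBne : (B : ℂ) ≠ 0 := Complex.ofReal_ne_zero.2 hBpos.ne'
  have hrne : (r : ℂ) ≠ 0 := Complex.ofReal_ne_zero.2 hr.ne'
  have hpqC : (Real.sqrt p : ℂ) * (Real.sqrt q : ℂ) = (K : ℝ) := by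
    exact_mod_cast congrArg Complex.ofReal hpq
  have hq2C : (Real.sqrt q : ℂ) ^ 2 = (q : ℂ) := by
    exact_mod_cast congrArg Complex.ofReal hq2
  have hp2C : (Real.sqrt p : ℂ) ^ 2 = (p : ℂ) := by
    exact_mod_cast congrArg Complex.ofReal hp2
  simp only [Complex.real_smul, Complex.ofReal_inv]
  push_cast [hrK]
  field_simp
  linear_combination
    (-(((p : ℂ) + q)) * ((K : ℂ) * ((r ^ (K - 1) : ℝ) : ℂ) ^ 2 *
        ((Real.sqrt p : ℝ) : ℂ) * ((Real.sqrt q : ℝ) : ℂ))) *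
      Complex.I_sq +
    ((K : ℂ) * ((p : ℂ) + q) * (((r ^ (K - 1) : ℝ) : ℂ) ^ 2)) *
      hpqC +
    (-(K : ℂ) ^ 2 * (((r ^ (K - 1) : ℝ) : ℂ) ^ 2)) *
      hp2C +
    (-(K : ℂ) ^ 2 * (((r ^ (K - 1) : ℝ) : ℂ) ^ 2)) *
      hq2C
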